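/- The number of edges of the k-coloring graph C_k(G) of a finite simple graph G equals (1/2)·Σ_{v∈V(G)} π_{G_v}(k), where G_v is obtained from G by replacing v with two adjacent copies v₁, v₂ each joined to all neighbors of v, and π_{G_v}(k) is the number of proper k-colorings of G_v. -/

import Mathlib

/-- The number of proper `k`-colorings of a simple graph `G`. -/
noncomputable def numColorings {V : Type} (G : SimpleGraph V) (k : ℕ) : ℕ :=
  Nat.card {f : V → Fin k // ∀ u w, G.Adj u w → f u ≠ f w}

/-- The `K_r`-shadow graph of `G` at the vertex `v`. -/
def cliqueShadow {V : Type} (G : SimpleGraph V) (v : V) (r : ℕ) :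
    SimpleGraph ({u : V // u ≠ v} ⊕ Fin r) :=
  SimpleGraph.fromRel (fun x y =>
    match x, y with
    | Sum.inl a, Sum.inl b => G.Adj a.1 b.1
    | Sum.inl a, Sum.inr _ => G.Adj a.1 v
    | Sum.inr _, Sum.inl _ => False
    | Sum.inr _, Sum.inr _ => True)

/-- The `k`-coloring graph of `G`: vertices are proper `k`-colorings of `G`, and two
colorings are adjacent iff they differ at exactly one vertex. -/
def coloringGraph {V : Type} (G : SimpleGraph V) (k : ℕ) :
    SimpleGraph {f : V → Fin k // ∀ u w, G.Adj u w → f u ≠ f w} :=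
  SimpleGraph.fromRel (fun f g => ∃ v, ∀ u, u ≠ v → f.1 u = g.1 u)

section Aux

variable {V : Type} [DecidableEq V] (G : SimpleGraph V) (k : ℕ)

omit [DecidableEq V] in
lemma diff_unique {f g : V → Fin k} (hne : f ≠ g) {v v' : V}
    (h : ∀ u, u ≠ v → f u = g u) (h' : ∀ u, u ≠ v' → f u = g u) : v = v' := by
  by_contra hvv
  apply hne; funext u
  by_cases hu : u = v
  · exact h' u (by simpa [hu] using hvv)
  · exact h u hu

omit [DecidableEq V] in
/-- adjacency in the coloring graph, simplified -/
lemma coloringGraph_adj_iff (f g : {f : V → Fin k // ∀ u w, G.Adj u w → f u ≠ f w}) :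
    (coloringGraph G k).Adj f g ↔ f ≠ g ∧ ∃ v, ∀ u, u ≠ v → f.1 u = g.1 u := by
  constructor
  · rintro ⟨hne, h | h⟩
    · exact ⟨hne, h⟩
    · obtain ⟨v, hv⟩ := h
      exact ⟨hne, v, fun u hu => (hv u hu).symm⟩
  · rintro ⟨hne, h⟩
    exact ⟨hne, Or.inl h⟩

omit [DecidableEq V] in
lemma shadow_adj_inr_inr (v : V) (i j : Fin 2) (hij : i ≠ j) :
    (cliqueShadow G v 2).Adj (Sum.inr i) (Sum.inr j) :=
  ⟨by simpa using hij, Or.inl trivial⟩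

omit [DecidableEq V] in
lemma shadow_adj_inl_inr (v : V) (a : {u : V // u ≠ v}) (i : Fin 2) (h : G.Adj a.1 v) :
    (cliqueShadow G v 2).Adj (Sum.inl a) (Sum.inr i) :=
  ⟨by simp, Or.inl h⟩

omit [DecidableEq V] in
lemma shadow_adj_inl_inl (v : V) (a b : {u : V // u ≠ v}) (h : G.Adj a.1 b.1) :
    (cliqueShadow G v 2).Adj (Sum.inl a) (Sum.inl b) :=
  ⟨by simp [Subtype.ext_iff, h.ne], Or.inl h⟩

/-- The function put together in the back map, parametrized by which clique vertex to use. -/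
def glue (v : V) (c : ({u : V // u ≠ v} ⊕ Fin 2) → Fin k) (i : Fin 2) : V → Fin k :=
  fun u => if h : u = v then c (Sum.inr i) else c (Sum.inl ⟨u, h⟩)

lemma glue_proper (v : V) (c : ({u : V // u ≠ v} ⊕ Fin 2) → Fin k)
    (hc : ∀ x y, (cliqueShadow G v 2).Adj x y → c x ≠ c y) (i : Fin 2) :
    ∀ u w, G.Adj u w → glue k v c i u ≠ glue k v c i w := by
  intro u w huw
  unfold glue
  by_cases hu : u = v <;> by_cases hw : w = v
  · exact absurd (hu ▸ hw ▸ huw) (G.irrefl)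
  · rw [dif_pos hu, dif_neg hw]
    exact (hc _ _ (shadow_adj_inl_inr G v ⟨w, hw⟩ i (hu ▸ huw.symm))).symm
  · rw [dif_neg hu, dif_pos hw]
    exact hc _ _ (shadow_adj_inl_inr G v ⟨u, hu⟩ i (hw ▸ huw))
  · rw [dif_neg hu, dif_neg hw]
    exact hc _ _ (shadow_adj_inl_inl G v ⟨u, hu⟩ ⟨w, hw⟩ huw)

/-- The back map: from a vertex and a shadow coloring to a dart. -/
def backMap (p : Σ v : V, {c : ({u : V // u ≠ v} ⊕ Fin 2) → Fin k //
      ∀ x y, (cliqueShadow G v 2).Adj x y → c x ≠ c y}) :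
    (coloringGraph G k).Dart := by
  refine ⟨(⟨glue k p.1 p.2.1 0, glue_proper G k p.1 p.2.1 p.2.2 0⟩,
           ⟨glue k p.1 p.2.1 1, glue_proper G k p.1 p.2.1 p.2.2 1⟩), ?_⟩
  rw [coloringGraph_adj_iff]
  have h01 : p.2.1 (Sum.inr 0) ≠ p.2.1 (Sum.inr 1) :=
    p.2.2 _ _ (shadow_adj_inr_inr G p.1 0 1 (by decide))
  constructor
  · intro h
    apply h01
    have h2 := congrFun (congrArg Subtype.val h) p.1
    simpa [glue] using h2
  · exact ⟨p.1, fun u hu => by simp [glue, dif_neg hu]⟩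

lemma backMap_bijective : Function.Bijective (backMap G k) := by
  constructor
  · rintro ⟨v, c, hc⟩ ⟨v', c', hc'⟩ h
    have hfst : glue k v c 0 = glue k v' c' 0 :=
      congrArg (fun d => d.toProd.1.1) h
    have hsnd : glue k v c 1 = glue k v' c' 1 :=
      congrArg (fun d => d.toProd.2.1) h
    have hvv : v = v' := by
      by_contra hne2
      have hv'v : v' ≠ v := fun h => hne2 h.symm
      have h1 := congrFun hfst v'
      have h2 := congrFun hsnd v'
      simp only [glue, dif_neg hv'v, dif_pos rfl] at h1 h2
      exact hc' _ _ (shadow_adj_inr_inr G v' 0 1 (by decide)) (h1.symm.trans h2)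
    subst hvv
    have hcc : c = c' := by
      funext x
      match x with
      | Sum.inl ⟨u, hu⟩ =>
        have h1 := congrFun hfst u
        simpa [glue, dif_neg hu] using h1
      | Sum.inr i =>
        fin_cases i
        · have h1 := congrFun hfst v
          simpa [glue] using h1
        · have h1 := congrFun hsnd v
          simpa [glue] using h1
    subst hcc
    rfl
  · rintro ⟨⟨f, g⟩, hadj⟩
    rw [coloringGraph_adj_iff] at hadj
    obtain ⟨hne, v, hv⟩ := hadj
    have hv : ∀ u, u ≠ v → f.1 u = g.1 u := hv
    have hne' : f.1 ≠ g.1 := fun h => hne (Subtype.ext h)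
    let c : ({u : V // u ≠ v} ⊕ Fin 2) → Fin k := fun x =>
      match x with
      | Sum.inl u => f.1 u.1
      | Sum.inr 0 => f.1 v
      | Sum.inr 1 => g.1 v
    have hfvgv : f.1 v ≠ g.1 v := by
      intro h
      apply hne'
      funext u
      by_cases hu : u = v
      · rw [hu]; exact h
      · exact hv u hu
    have hc : ∀ x y, (cliqueShadow G v 2).Adj x y → c x ≠ c y := by
      rintro x y ⟨hxy, hrel⟩
      match x, y with
      | Sum.inl a, Sum.inl b =>
        have hab : G.Adj a.1 b.1 := by
          rcases hrel with h | h
          · exact h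
          · exact h.symm
        exact f.2 a.1 b.1 hab
      | Sum.inl a, Sum.inr i =>
        have hav : G.Adj a.1 v := by
          rcases hrel with h | h
          · exact h
          · exact absurd h not_false
        fin_cases i
        · exact f.2 a.1 v hav
        · show f.1 a.1 ≠ g.1 v
          have h1 : f.1 a.1 = g.1 a.1 := hv a.1 a.2
          exact fun h => g.2 a.1 v hav (h1.symm.trans h)
      | Sum.inr i, Sum.inl a =>
        have hav : G.Adj a.1 v := by
          rcases hrel with h | h
          · exact absurd h not_false
          · exact h
        fin_cases i
        · exact (f.2 a.1 v hav).symm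
        · show g.1 v ≠ f.1 a.1
          have h1 : f.1 a.1 = g.1 a.1 := hv a.1 a.2
          exact fun h => g.2 a.1 v hav (h1.symm.trans h.symm)
      | Sum.inr i, Sum.inr j =>
        fin_cases i <;> fin_cases j
        · exact absurd rfl hxy
        · exact hfvgv
        · exact hfvgv.symm
        · exact absurd rfl hxy
    refine ⟨⟨v, c, hc⟩, ?_⟩
    have hf : glue k v c 0 = f.1 := by
      funext u
      by_cases hu : u = v
      · subst hu; simp [glue, c]
      · simp [glue, dif_neg hu, c]
    have hg : glue k v c 1 = g.1 := by
      funext u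
      by_cases hu : u = v
      · subst hu; simp [glue, c]
      · simp [glue, dif_neg hu, c, hv u hu]
    apply SimpleGraph.Dart.ext
    exact Prod.ext (Subtype.ext hf) (Subtype.ext hg)

end Aux

/-- The number of edges of `C_k(G)` equals `(1/2)·Σ_{v} π_{G_v}(k)` where `G_v` is the
pair shadow graph of `G` at `v` (stated multiplied through by 2). -/
theorem coloringGraph_edge_count {V : Type} [Fintype V] (G : SimpleGraph V) (k : ℕ) :
    2 * ((coloringGraph G k).edgeSet.ncard) =
      ∑ v : V, numColorings (cliqueShadow G v 2) k := by
  classical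
  haveI : Fintype {f : V → Fin k // ∀ u w, G.Adj u w → f u ≠ f w} :=
    Fintype.ofFinite _
  haveI : DecidableRel (coloringGraph G k).Adj := Classical.decRel _
  have h1 : (coloringGraph G k).edgeSet.ncard = (coloringGraph G k).edgeFinset.card := by
    rw [SimpleGraph.edgeFinset, Set.ncard_eq_toFinset_card']
  rw [h1, ← SimpleGraph.dart_card_eq_twice_card_edges,
    ← Nat.card_eq_fintype_card, ← Nat.card_eq_of_bijective _ (backMap_bijective G k)]
  haveI : ∀ v : V, Fintype {c : ({u : V // u ≠ v} ⊕ Fin 2) → Fin k //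
      ∀ x y, (cliqueShadow G v 2).Adj x y → c x ≠ c y} := fun v => Fintype.ofFinite _
  rw [Nat.card_eq_fintype_card, Fintype.card_sigma]
  exact Finset.sum_congr rfl fun v _ => by rw [numColorings, Nat.card_eq_fintype_card]
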